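/- Let Ω ⊂ ℝⁿ be a bounded measurable set, let f : Ω → [0,∞) be an integrable measurable function such that |{x ∈ Ω : f(x) = s}| = 0 for every s ≥ 0, let 0 < α < β, and let 0 < A < |Ω|. Set t = inf{ s ∈ ℝ : |{x ∈ Ω : f(x) ≤ s}| ≥ A } and D₁ = {x ∈ Ω : f(x) ≤ t}. If D ⊂ Ω is a measurable set with |D| = A whose symmetric difference with D₁ has positive measure, then the strict inequality ∫_Ω (β χ_{D₁} + α χ_{D₁ᶜ}) f dx < ∫_Ω (β χ_D + α χ_{Dᶜ}) f dx holds. -/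

import Mathlib

open MeasureTheory Set

/-- strict inequality version: if `D` differs from the sublevel set `D₁`
on a set of positive measure, then the corresponding weighted integral is strictly larger. -/
theorem sublevel_set_strict_minimizer {n : ℕ}
    (Ω : Set (EuclideanSpace ℝ (Fin n)))
    (hΩm : MeasurableSet Ω) (hΩb : Bornology.IsBounded Ω)
    (f : EuclideanSpace ℝ (Fin n) → ℝ) (hfm : Measurable f)
    (hf0 : ∀ x ∈ Ω, 0 ≤ f x) (hfi : IntegrableOn f Ω volume)
    (hlevel : ∀ s : ℝ, 0 ≤ s → volume {x ∈ Ω | f x = s} = 0)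
    (α β : ℝ) (hα : 0 < α) (hαβ : α < β)
    (A : ℝ) (hA0 : 0 < A) (hAΩ : A < (volume Ω).toReal)
    (t : ℝ) (ht : t = sInf {s : ℝ | A ≤ (volume {x ∈ Ω | f x ≤ s}).toReal})
    (D₁ : Set (EuclideanSpace ℝ (Fin n))) (hD₁ : D₁ = {x ∈ Ω | f x ≤ t})
    (D : Set (EuclideanSpace ℝ (Fin n))) (hDΩ : D ⊆ Ω) (hDm : MeasurableSet D)
    (hDA : (volume D).toReal = A) (hsym : 0 < volume (symmDiff D D₁)) :
    (∫ x in Ω,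
      (D₁.indicator (fun _ => β) x + (Ω \ D₁).indicator (fun _ => α) x) * f x) <
    ∫ x in Ω,
      (D.indicator (fun _ => β) x + (Ω \ D).indicator (fun _ => α) x) * f x := by
  have hΩfin : volume Ω ≠ ⊤ := hΩb.measure_lt_top.ne
  set S : Set ℝ := {s : ℝ | A ≤ (volume {x ∈ Ω | f x ≤ s}).toReal} with hS
  have hsetm : ∀ s : ℝ, MeasurableSet {x ∈ Ω | f x ≤ s} := fun s =>
    hΩm.inter (hfm measurableSet_Iic)
  have hsetfin : ∀ s : ℝ, volume {x ∈ Ω | f x ≤ s} ≠ ⊤ := fun s =>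
    (lt_of_le_of_lt (measure_mono (fun x hx => hx.1)) hΩb.measure_lt_top).ne
  have hGmono : ∀ ⦃s u : ℝ⦄, s ≤ u →
      volume {x ∈ Ω | f x ≤ s} ≤ volume {x ∈ Ω | f x ≤ u} := fun s u hsu =>
    measure_mono (fun x hx => ⟨hx.1, hx.2.trans hsu⟩)
  -- S is nonempty
  have hSne : S.Nonempty := by
    have hmono : Monotone fun k : ℕ => {x ∈ Ω | f x ≤ (k : ℝ)} := fun i j hij x hx =>
      ⟨hx.1, hx.2.trans (by exact_mod_cast hij)⟩
    have hun : (⋃ k : ℕ, {x ∈ Ω | f x ≤ (k : ℝ)}) = Ω := by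
      ext x
      simp only [mem_iUnion, mem_setOf_eq]
      constructor
      · rintro ⟨k, hk, _⟩; exact hk
      · intro hx; obtain ⟨k, hk⟩ := exists_nat_ge (f x); exact ⟨k, hx, hk⟩
    have htend := tendsto_measure_iUnion_atTop (μ := volume) hmono
    rw [hun] at htend
    have hlt : ENNReal.ofReal A < volume Ω :=
      (ENNReal.ofReal_lt_iff_lt_toReal hA0.le hΩfin).2 hAΩ
    obtain ⟨k, hk⟩ := ((tendsto_order.1 htend).1 _ hlt).exists
    exact ⟨(k : ℝ), (ENNReal.ofReal_le_iff_le_toReal (hsetfin _)).1 hk.le⟩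
  have hS_lb : ∀ s ∈ S, (0 : ℝ) ≤ s := by
    intro s hs
    by_contra hneg
    push_neg at hneg
    have hempty : {x ∈ Ω | f x ≤ s} = ∅ := by
      ext x; simp only [mem_setOf_eq, mem_empty_iff_false, iff_false]
      rintro ⟨hxΩ, hxs⟩; exact absurd (hxs.trans_lt hneg) (not_lt.2 (hf0 x hxΩ))
    rw [hS] at hs
    simp only [mem_setOf_eq, hempty, measure_empty, ENNReal.toReal_zero] at hs
    exact absurd hs (not_le.2 hA0)
  have hbdd : BddBelow S := ⟨0, hS_lb⟩
  have ht0 : 0 ≤ t := ht ▸ le_csInf hSne hS_lb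
  -- upper bound : ofReal A ≤ volume D₁
  have key1 : ENNReal.ofReal A ≤ volume {x ∈ Ω | f x ≤ t} := by
    have hanti : Antitone fun k : ℕ => {x ∈ Ω | f x ≤ t + 1 / (k + 1)} := by
      intro i j hij x hx
      have hji : (1:ℝ) / (j + 1) ≤ 1 / (i + 1) := by
        apply one_div_le_one_div_of_le (by positivity)
        have : (i:ℝ) ≤ j := by exact_mod_cast hij
        linarith
      refine ⟨hx.1, hx.2.trans (by linarith)⟩
    have hint : (⋂ k : ℕ, {x ∈ Ω | f x ≤ t + 1 / (k + 1)}) = {x ∈ Ω | f x ≤ t} := by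
      ext x
      simp only [mem_iInter, mem_setOf_eq]
      constructor
      · intro h
        refine ⟨(h 0).1, le_of_forall_pos_le_add fun ε hε => ?_⟩
        obtain ⟨k, hk⟩ := exists_nat_one_div_lt hε
        exact (h k).2.trans (by linarith)
      · intro ⟨h1, h2⟩ k
        have hpos : (0:ℝ) < 1 / ((k:ℝ) + 1) := by positivity
        exact ⟨h1, h2.trans (by linarith)⟩
    have htend := tendsto_measure_iInter_atTop (μ := volume)
      (fun k => (hsetm _).nullMeasurableSet) hanti ⟨0, hsetfin _⟩
    rw [hint] at htend
    refine ge_of_tendsto htend (Filter.Eventually.of_forall fun k => ?_)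
    have hpos : (0:ℝ) < 1 / ((k:ℝ) + 1) := by positivity
    have hlt : sInf S < t + 1 / (k + 1) := by rw [← ht]; linarith
    obtain ⟨s, hsS, hslt⟩ := (csInf_lt_iff hbdd hSne).1 hlt
    calc ENNReal.ofReal A ≤ volume {x ∈ Ω | f x ≤ s} :=
          (ENNReal.ofReal_le_iff_le_toReal (hsetfin s)).2 hsS
      _ ≤ _ := hGmono hslt.le
  -- lower bound : volume D₁ ≤ ofReal A
  have key2 : volume {x ∈ Ω | f x ≤ t} ≤ ENNReal.ofReal A := by
    have hmono : Monotone fun k : ℕ => {x ∈ Ω | f x ≤ t - 1 / (k + 1)} := by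
      intro i j hij x hx
      have hji : (1:ℝ) / (j + 1) ≤ 1 / (i + 1) := by
        apply one_div_le_one_div_of_le (by positivity)
        have : (i:ℝ) ≤ j := by exact_mod_cast hij
        linarith
      refine ⟨hx.1, hx.2.trans (by linarith)⟩
    have hun : (⋃ k : ℕ, {x ∈ Ω | f x ≤ t - 1 / (k + 1)}) = {x ∈ Ω | f x < t} := by
      ext x
      simp only [mem_iUnion, mem_setOf_eq]
      constructor
      · rintro ⟨k, hk1, hk2⟩
        refine ⟨hk1, lt_of_le_of_lt hk2 (by
          have : (0:ℝ) < 1 / ((k:ℝ) + 1) := by positivity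
          linarith)⟩
      · rintro ⟨h1, h2⟩
        obtain ⟨k, hk⟩ := exists_nat_one_div_lt (sub_pos.2 h2)
        exact ⟨k, h1, by linarith⟩
    have htend := tendsto_measure_iUnion_atTop (μ := volume) hmono
    rw [hun] at htend
    have hlt : volume {x ∈ Ω | f x < t} ≤ ENNReal.ofReal A := by
      refine le_of_tendsto htend (Filter.Eventually.of_forall fun k => ?_)
      have hnot : t - 1 / ((k:ℝ) + 1) ∉ S := by
        intro hmem
        have hle : sInf S ≤ t - 1 / ((k:ℝ) + 1) := csInf_le hbdd hmem
        rw [← ht] at hle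
        have : (0:ℝ) < 1 / ((k:ℝ) + 1) := by positivity
        linarith
      rw [hS, mem_setOf_eq, not_le] at hnot
      exact ((ENNReal.lt_ofReal_iff_toReal_lt (hsetfin _)).2 hnot).le
    have hsplit : {x ∈ Ω | f x ≤ t} ⊆ {x ∈ Ω | f x < t} ∪ {x ∈ Ω | f x = t} := by
      rintro x ⟨hx1, hx2⟩
      rcases lt_or_eq_of_le hx2 with h | h
      · exact Or.inl ⟨hx1, h⟩
      · exact Or.inr ⟨hx1, h⟩
    calc volume {x ∈ Ω | f x ≤ t} ≤ volume ({x ∈ Ω | f x < t} ∪ {x ∈ Ω | f x = t}) :=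
          measure_mono hsplit
      _ ≤ volume {x ∈ Ω | f x < t} + volume {x ∈ Ω | f x = t} := measure_union_le _ _
      _ = volume {x ∈ Ω | f x < t} := by rw [hlevel t ht0, add_zero]
      _ ≤ ENNReal.ofReal A := hlt
  have hD₁vol : volume D₁ = ENNReal.ofReal A := by rw [hD₁]; exact le_antisymm key2 key1
  have hD₁m : MeasurableSet D₁ := hD₁ ▸ hsetm t
  have hD₁Ω : D₁ ⊆ Ω := hD₁ ▸ fun x hx => hx.1
  have hD₁fin : volume D₁ ≠ ⊤ := by rw [hD₁vol]; exact ENNReal.ofReal_ne_top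
  have hDfin : volume D ≠ ⊤ := (lt_of_le_of_lt (measure_mono hDΩ) hΩb.measure_lt_top).ne
  have hDvol : volume D = ENNReal.ofReal A := by rw [← hDA, ENNReal.ofReal_toReal hDfin]
  -- the two difference sets have equal, positive, finite measure
  have hE1fin : volume (D \ D₁) ≠ ⊤ :=
    (lt_of_le_of_lt (measure_mono (diff_subset.trans hDΩ)) hΩb.measure_lt_top).ne
  have hE2fin : volume (D₁ \ D) ≠ ⊤ :=
    (lt_of_le_of_lt (measure_mono (diff_subset.trans hD₁Ω)) hΩb.measure_lt_top).ne
  have hinterfin : volume (D ∩ D₁) ≠ ⊤ :=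
    (lt_of_le_of_lt (measure_mono ((inter_subset_left).trans hDΩ)) hΩb.measure_lt_top).ne
  have h1 : volume (D ∩ D₁) + volume (D \ D₁) = volume D := measure_inter_add_diff D hD₁m
  have h2 : volume (D₁ ∩ D) + volume (D₁ \ D) = volume D₁ := measure_inter_add_diff D₁ hDm
  rw [Set.inter_comm D₁ D] at h2
  have heq : volume (D \ D₁) = volume (D₁ \ D) := by
    have : volume (D ∩ D₁) + volume (D \ D₁) = volume (D ∩ D₁) + volume (D₁ \ D) := by
      rw [h1, h2, hDvol, hD₁vol]
    exact (ENNReal.add_right_inj hinterfin).1 this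
  have hm1pos : 0 < volume (D \ D₁) := by
    by_contra h
    push_neg at h
    have h0 : volume (D \ D₁) = 0 := le_antisymm h zero_le
    have h0' : volume (D₁ \ D) = 0 := heq ▸ h0
    have : volume (symmDiff D D₁) ≤ 0 := by
      calc volume (symmDiff D D₁) = volume ((D \ D₁) ∪ (D₁ \ D)) := by rw [Set.symmDiff_def]
        _ ≤ volume (D \ D₁) + volume (D₁ \ D) := measure_union_le _ _
        _ = 0 := by rw [h0, h0', add_zero]
    exact absurd (lt_of_lt_of_le hsym this) (lt_irrefl 0)
  set m : ℝ := (volume (D \ D₁)).toReal with hm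
  have hmpos : 0 < m := ENNReal.toReal_pos hm1pos.ne' hE1fin
  have hmeq : (volume (D₁ \ D)).toReal = m := by rw [hm, heq]
  -- integrability on the pieces
  have hfE1 : IntegrableOn f (D \ D₁) volume := hfi.mono_set (diff_subset.trans hDΩ)
  have hfE2 : IntegrableOn f (D₁ \ D) volume := hfi.mono_set (diff_subset.trans hD₁Ω)
  have hE1m : MeasurableSet (D \ D₁) := hDm.diff hD₁m
  have hE2m : MeasurableSet (D₁ \ D) := hD₁m.diff hDm
  -- pointwise bounds
  have hgt : ∀ x ∈ D \ D₁, t < f x := by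
    intro x hx
    have hxΩ : x ∈ Ω := hDΩ hx.1
    by_contra hle
    push_neg at hle
    exact hx.2 (hD₁ ▸ (⟨hxΩ, hle⟩ : x ∈ {x | x ∈ Ω ∧ f x ≤ t}))
  have hle2 : ∀ x ∈ D₁ \ D, f x ≤ t := fun x hx => (hD₁ ▸ hx.1 : x ∈ {x | x ∈ Ω ∧ f x ≤ t}).2
  -- upper bound on the integral over D₁ \ D
  have h_upper : (∫ x in D₁ \ D, f x) ≤ t * m := by
    calc (∫ x in D₁ \ D, f x) ≤ ∫ _x in D₁ \ D, t :=
          setIntegral_mono_on hfE2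
            (integrableOn_const hE2fin) hE2m hle2
      _ = (volume (D₁ \ D)).toReal • t := setIntegral_const t
      _ = t * m := by rw [hmeq, smul_eq_mul, mul_comm]
  -- strict lower bound on the integral over D \ D₁
  have h_lower : t * m < ∫ x in D \ D₁, f x := by
    have hconst : IntegrableOn (fun _ => t) (D \ D₁) volume :=
      integrableOn_const hE1fin
    have hpos : 0 < ∫ x in D \ D₁, (f x - t) := by
      rw [setIntegral_pos_iff_support_of_nonneg_ae
        (ae_restrict_of_forall_mem hE1m fun x hx => sub_nonneg.2 (hgt x hx).le)
        (hfE1.sub hconst)]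
      refine lt_of_lt_of_le hm1pos (measure_mono (subset_inter ?_ Subset.rfl))
      exact fun x hx => sub_ne_zero.2 (hgt x hx).ne'
    have hsub : (∫ x in D \ D₁, (f x - t)) = (∫ x in D \ D₁, f x) - ∫ _x in D \ D₁, t :=
      integral_sub hfE1 hconst
    have hconst' : (∫ _x in D \ D₁, t) = (volume (D \ D₁)).toReal • t := setIntegral_const t
    rw [hsub, hconst'] at hpos
    have : (volume (D \ D₁)).toReal • t = t * m := by rw [smul_eq_mul, mul_comm]
    linarith [this ▸ hpos]
  -- strict inequality of the integrals over D₁ and D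
  have hID : (∫ x in D₁, f x) < ∫ x in D, f x := by
    have s1 : (∫ x in D ∩ D₁, f x) + (∫ x in D \ D₁, f x) = ∫ x in D, f x :=
      integral_inter_add_diff hD₁m (hfi.mono_set hDΩ)
    have s2 : (∫ x in D₁ ∩ D, f x) + (∫ x in D₁ \ D, f x) = ∫ x in D₁, f x :=
      integral_inter_add_diff hDm (hfi.mono_set hD₁Ω)
    rw [Set.inter_comm D₁ D] at s2
    linarith
  -- representation of the weighted integral
  have hrep : ∀ E : Set (EuclideanSpace ℝ (Fin n)), E ⊆ Ω → MeasurableSet E →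
      (∫ x in Ω, (E.indicator (fun _ => β) x + (Ω \ E).indicator (fun _ => α) x) * f x)
        = α * (∫ x in Ω, f x) + (β - α) * ∫ x in E, f x := by
    intro E hEΩ hEm
    have hfE : IntegrableOn f E volume := hfi.mono_set hEΩ
    have hEdm : MeasurableSet (Ω \ E) := hΩm.diff hEm
    have hia : IntegrableOn (E.indicator fun y => β * f y) Ω volume :=
      (hfi.const_mul β).indicator hEm
    have hib : IntegrableOn ((Ω \ E).indicator fun y => α * f y) Ω volume :=
      (hfi.const_mul α).indicator hEdm
    have hptw : ∀ x, (E.indicator (fun _ => β) x + (Ω \ E).indicator (fun _ => α) x) * f x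
        = E.indicator (fun y => β * f y) x + (Ω \ E).indicator (fun y => α * f y) x := by
      intro x
      rw [add_mul, Set.indicator_mul_left, Set.indicator_mul_left]
    calc (∫ x in Ω, (E.indicator (fun _ => β) x + (Ω \ E).indicator (fun _ => α) x) * f x)
        = ∫ x in Ω, (E.indicator (fun y => β * f y) x + (Ω \ E).indicator (fun y => α * f y) x) := by
          simp_rw [hptw]
      _ = (∫ x in Ω, E.indicator (fun y => β * f y) x)
            + ∫ x in Ω, (Ω \ E).indicator (fun y => α * f y) x := integral_add hia hib
      _ = (∫ x in Ω ∩ E, β * f x) + ∫ x in Ω ∩ (Ω \ E), α * f x := by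
          rw [setIntegral_indicator hEm, setIntegral_indicator hEdm]
      _ = (∫ x in E, β * f x) + ∫ x in Ω \ E, α * f x := by
          rw [inter_eq_self_of_subset_right hEΩ, inter_eq_self_of_subset_right diff_subset]
      _ = β * (∫ x in E, f x) + α * ∫ x in Ω \ E, f x := by
          rw [integral_const_mul, integral_const_mul]
      _ = α * (∫ x in Ω, f x) + (β - α) * ∫ x in E, f x := by
          have hsplit : (∫ x in Ω ∩ E, f x) + (∫ x in Ω \ E, f x) = ∫ x in Ω, f x :=
            integral_inter_add_diff hEm hfi
          rw [inter_eq_self_of_subset_right hEΩ] at hsplit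
          have : (∫ x in Ω \ E, f x) = (∫ x in Ω, f x) - ∫ x in E, f x := by linarith
          rw [this]; ring
  rw [hrep D₁ hD₁Ω hD₁m, hrep D hDΩ hDm]
  have hba : 0 < β - α := by linarith
  exact add_lt_add_right ((mul_lt_mul_iff_right₀ hba).2 hID) _
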